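/- For every natural number k ≥ 1, the factorial satisfies the two-sided Stirling bound: n^n exp(-n) √(2πn) < n! < n^n √(2πn) exp(-n + 1/(12n)). -/

import Mathlib

open Real

open scoped Topology Nat

open Filter Stirling

/-- The series bound: successive log-differences of `stirlingSeq` are strictly less
than `1/(12(m+1)) - 1/(12(m+2))`. -/
lemma log_stirlingSeq_diff_lt (m : ℕ) :
    Real.log (stirlingSeq (m + 1)) - Real.log (stirlingSeq (m + 2)) <
      1 / (12 * ((m : ℝ) + 1)) - 1 / (12 * ((m : ℝ) + 2)) := by
  set X : ℝ := ((1 : ℝ) / (2 * ((m : ℕ) + 1 : ℕ) + 1)) ^ 2 with hX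
  have hXpos : 0 < X := by positivity
  have hXlt : X < 1 := by
    rw [hX]
    have h1 : (1 : ℝ) / (2 * ((m : ℕ) + 1 : ℕ) + 1) < 1 := by
      rw [div_lt_one (by positivity)]
      push_cast; linarith [Nat.cast_nonneg (α := ℝ) m]
    have h0 : (0 : ℝ) ≤ (1 : ℝ) / (2 * ((m : ℕ) + 1 : ℕ) + 1) := by positivity
    nlinarith
  have hf := Stirling.log_stirlingSeq_diff_hasSum m
  -- geometric sum of g k = (1/3) * X^(k+1)
  have hg : HasSum (fun k : ℕ => (1 / 3 : ℝ) * X ^ (k + 1)) ((1 / 3 : ℝ) * (X / (1 - X))) := by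
    have h := (hasSum_geometric_of_lt_one hXpos.le hXlt).mul_left ((1 / 3 : ℝ) * X)
    have heq : (fun k : ℕ => (1 / 3 : ℝ) * X ^ (k + 1)) = fun k => (1 / 3 * X) * X ^ k := by
      funext k; rw [pow_succ']; ring
    have heq2 : (1 / 3 : ℝ) * (X / (1 - X)) = (1 / 3 * X) * (1 - X)⁻¹ := by
      rw [div_eq_mul_inv]; ring
    rw [heq, heq2]; exact h
  have key : Real.log (stirlingSeq (m + 1)) - Real.log (stirlingSeq (m + 2)) <
      (1 / 3 : ℝ) * (X / (1 - X)) := by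
    refine hasSum_lt (i := 1) ?_ ?_ hf hg
    · intro k
      have hk : (3 : ℝ) ≤ 2 * ((k + 1 : ℕ) : ℝ) + 1 := by
        push_cast; linarith [Nat.cast_nonneg (α := ℝ) k]
      have h5 : (1 : ℝ) / (2 * ((k + 1 : ℕ) : ℝ) + 1) ≤ 1 / 3 := by
        apply one_div_le_one_div_of_le <;> linarith
      exact mul_le_mul_of_nonneg_right h5 (by positivity)
    · show (1 : ℝ) / (2 * ((1 + 1 : ℕ) : ℝ) + 1) * X ^ (1 + 1) < 1 / 3 * X ^ (1 + 1)
      push_cast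
      nlinarith [hXpos, sq_nonneg X]
  refine key.trans_le (le_of_eq ?_)
  have hm : (0 : ℝ) < (m : ℝ) + 1 := by positivity
  have hd : (2 * ((m : ℝ) + 1) + 1) ≠ 0 := by positivity
  have h1X : (1 : ℝ) - X = (4 * ((m : ℝ) + 1) * ((m : ℝ) + 2)) / ((2 * ((m : ℝ) + 1) + 1) ^ 2) := by
    rw [hX]; push_cast; field_simp; ring
  rw [hX] at h1X ⊢
  rw [h1X]
  push_cast
  have hm2 : ((m : ℝ) + 2) ≠ 0 := by positivity
  have hm1 : ((m : ℝ) + 1) ≠ 0 := by positivity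
  field_simp
  ring

/-- `stirlingSeq` (shifted) is strictly decreasing in log. -/
lemma log_stirlingSeq_strict_anti (m : ℕ) :
    Real.log (stirlingSeq (m + 2)) < Real.log (stirlingSeq (m + 1)) := by
  have hf := Stirling.log_stirlingSeq_diff_hasSum m
  have h0 : (0 : ℝ) < (1 : ℝ) / (2 * ((0 + 1 : ℕ) : ℝ) + 1) *
      (((1 : ℝ) / (2 * ((m + 1 : ℕ) : ℝ) + 1)) ^ 2) ^ (0 + 1) := by positivity
  have := le_hasSum hf 0 (fun k _ => by positivity)
  linarith

theorem stirling_two_sided (n : ℕ) (hn : 1 ≤ n) :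
    (n : ℝ)^n * Real.exp (-(n : ℝ)) * Real.sqrt (2 * Real.pi * n) < (Nat.factorial n : ℝ) ∧
    (Nat.factorial n : ℝ) <
      (n : ℝ)^n * Real.sqrt (2 * Real.pi * n) * Real.exp (-(n : ℝ) + 1 / (12*(n : ℝ))) := by
  obtain ⟨m, rfl⟩ : ∃ m, n = m + 1 := ⟨n - 1, (Nat.succ_pred_eq_of_pos hn).symm⟩
  set D : ℕ → ℝ := fun k => Real.log (stirlingSeq (k + 1)) with hD
  set E : ℕ → ℝ := fun k => D k - 1 / (12 * ((k : ℝ) + 1)) with hE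
  have hπ : (0 : ℝ) < Real.sqrt Real.pi := Real.sqrt_pos.mpr Real.pi_pos
  -- D tends to log √π
  have hDlim : Tendsto D atTop (𝓝 (Real.log (Real.sqrt Real.pi))) := by
    have h1 : Tendsto (fun k : ℕ => stirlingSeq (k + 1)) atTop (𝓝 (Real.sqrt Real.pi)) :=
      (Filter.tendsto_add_atTop_iff_nat 1).mpr Stirling.tendsto_stirlingSeq_sqrt_pi
    exact ((Real.continuousAt_log hπ.ne').tendsto).comp h1
  -- E tends to log √π
  have hElim : Tendsto E atTop (𝓝 (Real.log (Real.sqrt Real.pi))) := by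
    have h3 : Tendsto (fun k : ℕ => (12 : ℝ) * ((k : ℝ) + 1)) atTop atTop :=
      (tendsto_natCast_atTop_atTop.atTop_add tendsto_const_nhds).const_mul_atTop (by norm_num)
    have h2 : Tendsto (fun k : ℕ => 1 / (12 * ((k : ℝ) + 1))) atTop (𝓝 0) := by
      simpa only [one_div, Pi.inv_def] using h3.inv_tendsto_atTop
    have := hDlim.sub h2
    rwa [sub_zero] at this
  -- D is strictly decreasing, E strictly increasing
  have hDanti : ∀ k, D (k + 1) < D k := fun k => log_stirlingSeq_strict_anti k
  have hEmono : StrictMono E := by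
    apply strictMono_nat_of_lt_succ
    intro k
    have := log_stirlingSeq_diff_lt k
    simp only [hE, hD]
    push_cast
    have h2 : ((k : ℝ) + 1 + 1) = (k : ℝ) + 2 := by ring
    rw [h2]
    linarith
  -- bounds on D m
  have hDge : Real.log (Real.sqrt Real.pi) ≤ D (m + 1) := by
    refine le_of_tendsto hDlim ?_
    filter_upwards [eventually_ge_atTop (m + 1)] with k hk
    have h := Stirling.log_stirlingSeq'_antitone hk
    exact h
  have hlower : Real.log (Real.sqrt Real.pi) < D m := lt_of_le_of_lt hDge (hDanti m)
  have hEle : E (m + 1) ≤ Real.log (Real.sqrt Real.pi) := by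
    refine ge_of_tendsto hElim ?_
    filter_upwards [eventually_ge_atTop (m + 1)] with k hk
    exact hEmono.monotone hk
  have hupper : D m < Real.log (Real.sqrt Real.pi) + 1 / (12 * ((m : ℝ) + 1)) := by
    have := lt_of_lt_of_le (hEmono (Nat.lt_succ_self m)) hEle
    simp only [hE] at this
    linarith
  -- translate to stirlingSeq
  have hspos : 0 < stirlingSeq (m + 1) := Stirling.stirlingSeq'_pos m
  have hs_lower : Real.sqrt Real.pi < stirlingSeq (m + 1) := by
    have := Real.exp_lt_exp.mpr hlower
    rwa [Real.exp_log hπ, Real.exp_log hspos] at this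
  have hs_upper : stirlingSeq (m + 1) <
      Real.sqrt Real.pi * Real.exp (1 / (12 * ((m : ℝ) + 1))) := by
    have := Real.exp_lt_exp.mpr hupper
    rwa [Real.exp_log hspos, Real.exp_add, Real.exp_log hπ] at this
  -- unfold stirlingSeq
  set n := m + 1 with hn'
  have hnpos : (0 : ℝ) < (n : ℝ) := by positivity
  set C : ℝ := Real.sqrt (2 * (n : ℝ)) * ((n : ℝ) / Real.exp 1) ^ n with hC
  have hCpos : 0 < C := by
    rw [hC]; positivity
  have hfact : (Nat.factorial n : ℝ) = stirlingSeq n * C := by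
    rw [hC, Stirling.stirlingSeq, div_mul_cancel₀]
    positivity
  have hCeq : (n : ℝ) ^ n * Real.exp (-(n : ℝ)) * Real.sqrt (2 * Real.pi * (n : ℝ)) =
      Real.sqrt Real.pi * C := by
    rw [hC]
    have h1 : Real.sqrt (2 * Real.pi * (n : ℝ)) = Real.sqrt Real.pi * Real.sqrt (2 * (n : ℝ)) := by
      rw [← Real.sqrt_mul Real.pi_pos.le]
      ring_nf
    have h2 : ((n : ℝ) / Real.exp 1) ^ n = (n : ℝ) ^ n * Real.exp (-(n : ℝ)) := by
      rw [div_pow, Real.exp_one_pow, Real.exp_neg, div_eq_mul_inv]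
    rw [h1, h2]
    ring
  have hcast : ((m : ℝ) + 1) = (n : ℝ) := by rw [hn']; push_cast; ring
  constructor
  · rw [hfact, hCeq]
    exact (mul_lt_mul_of_pos_right hs_lower hCpos)
  · rw [hfact]
    have hlt : stirlingSeq n * C < Real.sqrt Real.pi * Real.exp (1 / (12 * (n : ℝ))) * C := by
      apply mul_lt_mul_of_pos_right _ hCpos
      rw [← hcast]
      exact hs_upper
    refine hlt.trans_le (le_of_eq ?_)
    rw [Real.exp_add]
    linear_combination (-Real.exp (1 / (12 * (n : ℝ)))) * hCeq
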